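/- arXiv:2307.10742 — 3 statements merged into one kernel-verified Lean document; each statement's English description precedes it below -/
import Mathlib

section
/- Let B = {X_1,…,X_n} be a finite set of indices, Φ(X) bounded operators, s ∈ [0,1]^B, H(s) = Σ_{X∈B} s_X Φ(X), and β ≥ 0. Then ‖ Π_{X∈B} (∂/∂s_X) e^{-β H(s)} ‖ ≤ (Π_{X∈B} β‖Φ(X)‖) · e^{β‖H(s)‖}. -/
open NormedSpace

/-- The iterated mixed partial derivative of a function of finitely many real
parameters, one derivative along each coordinate direction listed in `l`. -/
noncomputable def mixedPartial {ι : Type*} [Fintype ι] [DecidableEq ι]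
    {A : Type*} [NormedAddCommGroup A] [NormedSpace ℝ A] :
    List ι → ((ι → ℝ) → A) → ((ι → ℝ) → A)
  | [], f => f
  | x :: xs, f => fun s => fderiv ℝ (mixedPartial xs f) s (Pi.single x 1)

lemma norm_derivSeries_le {𝕜 E F : Type*} [NontriviallyNormedField 𝕜]
    [NormedAddCommGroup E] [NormedSpace 𝕜 E] [NormedAddCommGroup F] [NormedSpace 𝕜 F]
    (p : FormalMultilinearSeries 𝕜 E F) (n : ℕ) :
    ‖p.derivSeries n‖ ≤ (n + 1) * ‖p (n + 1)‖ := by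
  have h1 : ‖p.derivSeries n‖ ≤ ‖p.changeOriginSeries 1 n‖ := by
    refine (ContinuousLinearMap.norm_compContinuousMultilinearMap_le _ _).trans ?_
    refine mul_le_of_le_one_left (norm_nonneg _) ?_
    exact ContinuousLinearMap.opNorm_le_bound _ zero_le_one (by simp)
  refine h1.trans ?_
  have hc : Fintype.card {s : Finset (Fin (1 + n)) // s.card = n} = n + 1 := by
    rw [Fintype.card_subtype, ← Finset.powerset_univ, ← Finset.powersetCard_eq_filter,
      Finset.card_powersetCard, Finset.card_univ, Fintype.card_fin, add_comm,
      Nat.choose_succ_self_right]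
  have h2 := p.nnnorm_changeOriginSeries_le_tsum 1 n
  rw [tsum_fintype, Finset.sum_const, Finset.card_univ, hc, nsmul_eq_mul] at h2
  have h3 := NNReal.coe_le_coe.mpr h2
  push_cast at h3
  rw [add_comm 1 n] at h3
  exact_mod_cast h3

lemma mixedPartial_exp_comp {ι : Type*} [Fintype ι] [DecidableEq ι]
    {A : Type*} [NormedRing A] [NormedAlgebra ℂ A] [CompleteSpace A]
    (h1 : ‖(1 : A)‖ ≤ 1) (M : (ι → ℝ) →L[ℝ] A) (l : List ι) :
    ∃ (h : A → A) (q : FormalMultilinearSeries ℂ A A),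
      HasFPowerSeriesOnBall h q 0 ⊤ ∧
      (∀ m, ‖q m‖ ≤ (l.map (fun x => ‖M (Pi.single x 1)‖)).prod / m.factorial) ∧
      mixedPartial l (fun u => exp (M u)) = fun u => h (M u) := by
  induction l with
  | nil =>
    refine ⟨exp, expSeries ℂ A, ?_, fun m => ?_, rfl⟩
    · have := hasFPowerSeriesOnBall_exp_of_radius_pos
        (𝕂 := ℂ) (𝔸 := A) (by rw [expSeries_radius_eq_top]; exact ENNReal.zero_lt_top)
      rwa [expSeries_radius_eq_top] at this
    · rw [List.map_nil, List.prod_nil]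
      have he : expSeries ℂ A m =
          (m.factorial⁻¹ : ℂ) • ContinuousMultilinearMap.mkPiAlgebraFin ℂ m A := rfl
      rw [he]
      refine (ContinuousMultilinearMap.opNorm_smul_le _ _).trans ?_
      have : ‖((m.factorial :ℂ)⁻¹)‖ = (m.factorial : ℝ)⁻¹ := by
        rw [norm_inv, Complex.norm_natCast]
      rw [this]
      have hb : ‖ContinuousMultilinearMap.mkPiAlgebraFin ℂ m A‖ ≤ 1 :=
        (ContinuousMultilinearMap.norm_mkPiAlgebraFin_le).trans (by simp [h1])
      calc (m.factorial : ℝ)⁻¹ * ‖ContinuousMultilinearMap.mkPiAlgebraFin ℂ m A‖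
          ≤ (m.factorial : ℝ)⁻¹ * 1 := by
            exact mul_le_mul_of_nonneg_left hb (by positivity)
        _ = 1 / m.factorial := by ring
  | cons x xs ih =>
    obtain ⟨h, q, hq, hbound, heq⟩ := ih
    set C : A := M (Pi.single x 1) with hC
    have hmem : ∀ a : A, a ∈ EMetric.ball (0 : A) ⊤ := fun a =>
      EMetric.mem_ball.mpr (edist_lt_top _ _)
    have hdiff : ∀ a : A, DifferentiableAt ℂ h a := fun a =>
      (hq.analyticAt_of_mem (hmem a)).differentiableAt
    refine ⟨fun a => (fderiv ℂ h a) C,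
      (ContinuousLinearMap.apply ℂ A C).compFormalMultilinearSeries q.derivSeries,
      ?_, fun m => ?_, ?_⟩
    · exact (ContinuousLinearMap.apply ℂ A C).comp_hasFPowerSeriesOnBall hq.fderiv
    · rw [ContinuousLinearMap.compFormalMultilinearSeries_apply]
      refine (ContinuousLinearMap.norm_compContinuousMultilinearMap_le _ _).trans ?_
      have hA : ‖ContinuousLinearMap.apply ℂ A C‖ ≤ ‖C‖ :=
        ContinuousLinearMap.opNorm_le_bound _ (norm_nonneg C)
          (fun f => (f.le_opNorm C).trans_eq (mul_comm _ _))
      have hd := norm_derivSeries_le q m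
      have hq1 := hbound (m + 1)
      calc ‖ContinuousLinearMap.apply ℂ A C‖ * ‖q.derivSeries m‖
          ≤ ‖C‖ * ((m + 1) * ‖q (m + 1)‖) := by
            exact mul_le_mul hA hd (by positivity) (norm_nonneg _)
        _ ≤ ‖C‖ * ((m + 1) *
            ((xs.map (fun x => ‖M (Pi.single x 1)‖)).prod / (m + 1).factorial)) := by
            gcongr
        _ = ((x :: xs).map (fun x => ‖M (Pi.single x 1)‖)).prod / m.factorial := by
            rw [List.map_cons, List.prod_cons, Nat.factorial_succ]
            push_cast
            field_simp
            ring
    · show (fun s => fderiv ℝ (mixedPartial xs (fun u => exp (M u))) s (Pi.single x 1)) = _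
      rw [heq]
      funext u
      have hfd : HasFDerivAt (fun v => h (M v))
          ((fderiv ℝ h (M u)).comp M) u :=
        (((hdiff (M u)).restrictScalars ℝ).hasFDerivAt).comp u M.hasFDerivAt
      rw [hfd.fderiv, ContinuousLinearMap.comp_apply,
        (hdiff (M u)).fderiv_restrictScalars ℝ]
      rfl

set_option maxHeartbeats 1000000 in
set_option synthInstance.maxHeartbeats 200000 in
/-- Bound on the mixed partial derivatives (one in each decoupling parameter `s_X`,
`X ∈ B`, each appearing linearly in `H(s) = Σ_X s_X Φ(X)`) of `e^{-β H(s)}`: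
`‖Π_{X∈B} ∂/∂s_X e^{-β H(s)}‖ ≤ (Π_{X∈B} β ‖Φ(X)‖) e^{β ‖H(s)‖}`. -/
theorem stmt_9 {ι E : Type*} [Fintype ι] [DecidableEq ι] [LinearOrder ι]
    [NormedAddCommGroup E] [InnerProductSpace ℂ E] [FiniteDimensional ℂ E]
    (Φ : ι → E →L[ℂ] E) (β : ℝ) (hβ : 0 ≤ β) (B : Finset ι)
    (s : ι → ℝ) (hs : ∀ X ∈ B, s X ∈ Set.Icc (0:ℝ) 1) :
    ‖mixedPartial (B.sort (· ≤ ·))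
        (fun u => exp (-(β • ∑ X ∈ B, u X • Φ X))) s‖ ≤
      (∏ X ∈ B, β * ‖Φ X‖) * Real.exp (β * ‖∑ X ∈ B, s X • Φ X‖) := by
  set Mc : (ι → ℝ) →L[ℝ] (E →L[ℂ] E) :=
    -(β • ∑ X ∈ B, (ContinuousLinearMap.proj X).smulRight (Φ X)) with hMcdef
  have hMc : ∀ u : ι → ℝ, Mc u = -(β • ∑ X ∈ B, u X • Φ X) := by
    intro u
    simp [hMcdef, ContinuousLinearMap.sum_apply]
  have hsingle : ∀ x ∈ B, ‖Mc (Pi.single x 1)‖ = β * ‖Φ x‖ := by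
    intro x hx
    have : Mc (Pi.single x 1) = -(β • Φ x) := by
      rw [hMc]
      congr 1
      congr 1
      rw [Finset.sum_eq_single_of_mem x hx]
      · simp
      · intro b _ hbx
        simp [Pi.single_apply, hbx]
    rw [this, norm_neg]
    rw [norm_smul β (Φ x), Real.norm_eq_abs, abs_of_nonneg hβ]
  have hMs : ‖Mc s‖ = β * ‖∑ X ∈ B, s X • Φ X‖ := by
    rw [hMc, norm_neg, norm_smul β (∑ X ∈ B, s X • Φ X), Real.norm_eq_abs, abs_of_nonneg hβ]
  have h1 : ‖(1 : E →L[ℂ] E)‖ ≤ 1 := by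
    rw [ContinuousLinearMap.one_def]; exact ContinuousLinearMap.norm_id_le
  obtain ⟨h, q, hq, hbound, heq⟩ := mixedPartial_exp_comp h1 Mc (B.sort (· ≤ ·))
  have hfun : (fun u => exp (-(β • ∑ X ∈ B, u X • Φ X)))
      = fun u => exp (Mc u) := by
    funext u; rw [hMc]
  rw [hfun, heq]
  have hcprod : ((B.sort (· ≤ ·)).map (fun x => ‖Mc (Pi.single x 1)‖)).prod
      = ∏ X ∈ B, β * ‖Φ X‖ := by
    have hm : (B.sort (· ≤ ·)).map (fun x => ‖Mc (Pi.single x 1)‖)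
        = (B.sort (· ≤ ·)).map (fun x => β * ‖Φ x‖) :=
      List.map_congr_left (fun x hx => hsingle x ((Finset.mem_sort _).mp hx))
    rw [hm]
    have hp : List.Perm ((B.sort (· ≤ ·)).map (fun x => β * ‖Φ x‖))
        (B.toList.map (fun x => β * ‖Φ x‖)) := (Finset.sort_perm_toList _ _).map _
    rw [hp.prod_eq, Finset.prod_map_toList]
  have hmem : (Mc s) ∈ EMetric.ball (0 : E →L[ℂ] E) ⊤ :=
    EMetric.mem_ball.mpr (edist_lt_top _ _)
  have hsum := hq.hasSum hmem
  rw [zero_add] at hsum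
  have hg : HasSum (fun n => (∏ X ∈ B, β * ‖Φ X‖) * (‖Mc s‖ ^ n / n.factorial))
      ((∏ X ∈ B, β * ‖Φ X‖) * Real.exp ‖Mc s‖) := by
    have hx := NormedSpace.expSeries_div_hasSum_exp (‖Mc s‖)
    rw [Real.exp_eq_exp_ℝ]
    exact hx.mul_left _
  show ‖h (Mc s)‖ ≤ _
  calc ‖h (Mc s)‖ = ‖∑' n, q n (fun _ => Mc s)‖ := by rw [hsum.tsum_eq]
    _ ≤ (∏ X ∈ B, β * ‖Φ X‖) * Real.exp ‖Mc s‖ := by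
        refine tsum_of_norm_bounded hg (fun n => ?_)
        refine ((q n).le_opNorm _).trans ?_
        have hpow : (∏ _i : Fin n, ‖Mc s‖) = ‖Mc s‖ ^ n := by
          rw [Finset.prod_const, Finset.card_univ, Fintype.card_fin]
        rw [hpow]
        have hb := hbound n
        rw [hcprod] at hb
        calc ‖q n‖ * ‖Mc s‖ ^ n
            ≤ ((∏ X ∈ B, β * ‖Φ X‖) / n.factorial) * ‖Mc s‖ ^ n :=
              mul_le_mul_of_nonneg_right hb (by positivity)
          _ = (∏ X ∈ B, β * ‖Φ X‖) * (‖Mc s‖ ^ n / n.factorial) := by ring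
    _ = (∏ X ∈ B, β * ‖Φ X‖) * Real.exp (β * ‖∑ X ∈ B, s X • Φ X‖) := by rw [hMs]
end

section
/- Let B be a countable set of bonds and ζ: B → (0,∞) weights. Suppose nonnegative weights W: B → [0,∞) satisfy W(X) ≤ ζ(X) / Π_{Y∈B, Y≠X, Y∩X≠∅} (1+ζ(Y)) for every X ∈ B (products assumed finite). Define T(X_0) = 1 + Σ_{n≥1} Σ over finite families {X_1,…,X_n} ⊆ B\{X_0} whose intersection graph together with X_0 is connected, of Π_i W(X_i). Then W(X)·T(X) ≤ ζ(X) for every X ∈ B; in particular T(X) is finite. -/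
open scoped ENNReal

/-- The intersection graph of a finite family of bonds: two distinct bonds are adjacent
iff they intersect. -/
def bondGraph {L : Type*} [DecidableEq L] (𝒮 : Finset (Finset L)) :
    SimpleGraph {X // X ∈ 𝒮} :=
  SimpleGraph.fromRel (fun A B => ¬ Disjoint A.1 B.1)

set_option linter.unusedSectionVars false

namespace GKaux

variable {L : Type*} [DecidableEq L]

/-- Step relation for chains of intersecting bonds inside a family. -/
def bstep (𝒮 : Finset (Finset L)) (P Q : Finset L) : Prop :=
  P ∈ 𝒮 ∧ Q ∈ 𝒮 ∧ ¬ Disjoint P Q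

lemma bstep_symm {𝒮 : Finset (Finset L)} {P Q} (h : bstep 𝒮 P Q) : bstep 𝒮 Q P :=
  ⟨h.2.1, h.1, fun d => h.2.2 d.symm⟩

lemma brtg_symm {𝒮 : Finset (Finset L)} {P Q}
    (h : Relation.ReflTransGen (bstep 𝒮) P Q) : Relation.ReflTransGen (bstep 𝒮) Q P := by
  induction h with
  | refl => exact .refl
  | tail _ hbc ih => exact .head (bstep_symm hbc) ih

lemma bstep_mono {𝒮 𝒯 : Finset (Finset L)} (h : 𝒮 ⊆ 𝒯) {P Q} (hs : bstep 𝒮 P Q) :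
    bstep 𝒯 P Q := ⟨h hs.1, h hs.2.1, hs.2.2⟩

lemma brtg_mono {𝒮 𝒯 : Finset (Finset L)} (h : 𝒮 ⊆ 𝒯) {P Q}
    (hs : Relation.ReflTransGen (bstep 𝒮) P Q) : Relation.ReflTransGen (bstep 𝒯) P Q :=
  Relation.ReflTransGen.mono (fun _ _ hh => bstep_mono h hh) _ _ hs

lemma bondGraph_connected_iff (𝒮 : Finset (Finset L)) :
    (bondGraph 𝒮).Connected ↔
      𝒮.Nonempty ∧ ∀ A ∈ 𝒮, ∀ B ∈ 𝒮, Relation.ReflTransGen (bstep 𝒮) A B := by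
  constructor
  · intro h
    have hne : 𝒮.Nonempty := by
      obtain ⟨⟨A, hA⟩⟩ := h.nonempty
      exact ⟨A, hA⟩
    refine ⟨hne, fun A hA B hB => ?_⟩
    have := (h.preconnected ⟨A, hA⟩ ⟨B, hB⟩)
    rw [SimpleGraph.reachable_iff_reflTransGen] at this
    refine Relation.ReflTransGen.lift (r := (bondGraph 𝒮).Adj) Subtype.val
      (fun a b hab => ?_) _ _ this
    rw [bondGraph, SimpleGraph.fromRel_adj] at hab
    refine ⟨a.2, b.2, ?_⟩
    rcases hab.2 with h' | h'
    · exact h'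
    · exact fun d => h' d.symm
  · rintro ⟨⟨A₀, hA₀⟩, hconn⟩
    haveI : Nonempty {X // X ∈ 𝒮} := ⟨⟨A₀, hA₀⟩⟩
    refine ⟨fun u v => ?_⟩
    rw [SimpleGraph.reachable_iff_reflTransGen]
    have key : ∀ (P Q : Finset L), Relation.ReflTransGen (bstep 𝒮) P Q →
        ∀ (hP : P ∈ 𝒮) (hQ : Q ∈ 𝒮),
          Relation.ReflTransGen (bondGraph 𝒮).Adj ⟨P, hP⟩ ⟨Q, hQ⟩ := by
      intro P Q h
      induction h with
      | refl => intro hP hQ; exact .refl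
      | @tail b c hab hbc ih =>
        intro hP hQ
        have hb := hbc.1
        by_cases hbceq : b = c
        · subst hbceq
          exact ih hP hQ
        · refine (ih hP hb).tail ?_
          rw [bondGraph, SimpleGraph.fromRel_adj]
          exact ⟨by simpa [Subtype.ext_iff] using hbceq, Or.inl hbc.2.2⟩
    exact key u.1 v.1 (hconn u.1 u.2 v.1 v.2) u.2 v.2
end GKaux

namespace GKaux
variable {L : Type*} [DecidableEq L]

/-- Connected component of `A` inside the family `𝒮`. -/
noncomputable def comp (𝒮 : Finset (Finset L)) (A : Finset L) : Finset (Finset L) :=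
  @Finset.filter _ (fun B => Relation.ReflTransGen (bstep 𝒮) A B) (Classical.decPred _) 𝒮

lemma mem_comp {𝒮 : Finset (Finset L)} {A B : Finset L} :
    B ∈ comp 𝒮 A ↔ B ∈ 𝒮 ∧ Relation.ReflTransGen (bstep 𝒮) A B := by
  rw [comp, @Finset.mem_filter _ _ (Classical.decPred _)]

lemma comp_subset {𝒮 : Finset (Finset L)} {A : Finset L} : comp 𝒮 A ⊆ 𝒮 :=
  fun _ h => (mem_comp.1 h).1

lemma self_mem_comp {𝒮 : Finset (Finset L)} {A : Finset L} (hA : A ∈ 𝒮) : A ∈ comp 𝒮 A :=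
  mem_comp.2 ⟨hA, .refl⟩

/-- A chain inside `𝒮` starting at `A` stays inside `comp 𝒮 A` and is a chain there. -/
lemma rtg_comp {𝒮 : Finset (Finset L)} {A B : Finset L}
    (h : Relation.ReflTransGen (bstep 𝒮) A B) :
    Relation.ReflTransGen (bstep (comp 𝒮 A)) A B := by
  induction h with
  | refl => exact .refl
  | @tail b c hab hbc ih =>
    exact ih.tail ⟨mem_comp.2 ⟨hbc.1, hab⟩, mem_comp.2 ⟨hbc.2.1, hab.tail hbc⟩, hbc.2.2⟩

lemma comp_disjoint {𝒮 : Finset (Finset L)} {A Y D : Finset L} (hAS : A ∈ 𝒮)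
    (hA : A ∉ comp 𝒮 Y) (hD : D ∈ comp 𝒮 A) : D ∉ comp 𝒮 Y := by
  intro hD'
  rcases mem_comp.1 hD with ⟨hDS, hAD⟩
  rcases mem_comp.1 hD' with ⟨_, hYD⟩
  exact hA (mem_comp.2 ⟨hAS, hYD.trans (brtg_symm hAD)⟩)

/-- Every bond of `𝒮` is chain-connected inside its component to a bond meeting `X`. -/
lemma exists_boundary {𝒮 : Finset (Finset L)} {X : Finset L} (hX : X ∉ 𝒮) {A : Finset L}
    (h : Relation.ReflTransGen (bstep (insert X 𝒮)) A X) :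
    A ∈ 𝒮 → ∃ B, Relation.ReflTransGen (bstep 𝒮) A B ∧ ¬ Disjoint B X ∧ B ∈ 𝒮 := by
  induction h using Relation.ReflTransGen.head_induction_on with
  | refl => exact fun hA => absurd hA hX
  | @head a c hac hcX ih =>
    intro hA
    by_cases hc : c = X
    · exact ⟨a, .refl, hc ▸ hac.2.2, hA⟩
    · have hc𝒮 : c ∈ 𝒮 := (Finset.mem_insert.1 hac.2.1).resolve_left hc
      obtain ⟨B, hcB, hBX, hB⟩ := ih hc𝒮
      exact ⟨B, .head ⟨hA, hc𝒮, hac.2.2⟩ hcB, hBX, hB⟩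
end GKaux

namespace GKaux
variable {L : Type*} [DecidableEq L]

lemma conn_insert_iff {X : Finset L} {𝒮 : Finset (Finset L)} (hX : X ∉ 𝒮) :
    (bondGraph (insert X 𝒮)).Connected ↔
      ∀ A ∈ 𝒮, Relation.ReflTransGen (bstep (insert X 𝒮)) A X := by
  rw [bondGraph_connected_iff]
  constructor
  · intro h A hA
    exact h.2 A (Finset.mem_insert_of_mem hA) X (Finset.mem_insert_self _ _)
  · intro h
    refine ⟨⟨X, Finset.mem_insert_self _ _⟩, fun A hA B hB => ?_⟩
    have hAX : Relation.ReflTransGen (bstep (insert X 𝒮)) A X := by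
      rcases Finset.mem_insert.1 hA with rfl | hA'
      · exact .refl
      · exact h A hA'
    have hBX : Relation.ReflTransGen (bstep (insert X 𝒮)) B X := by
      rcases Finset.mem_insert.1 hB with rfl | hB'
      · exact .refl
      · exact h B hB'
    exact hAX.trans (brtg_symm hBX)

lemma comp_connected {𝒮 : Finset (Finset L)} {Y : Finset L} (hY : Y ∈ 𝒮) :
    (bondGraph (comp 𝒮 Y)).Connected := by
  rw [bondGraph_connected_iff]
  refine ⟨⟨Y, self_mem_comp hY⟩, fun A hA B hB => ?_⟩
  have h1 := rtg_comp (mem_comp.1 hA).2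
  have h2 := rtg_comp (mem_comp.1 hB).2
  exact (brtg_symm h1).trans h2

lemma rest_connected {X : Finset L} {𝒮 : Finset (Finset L)} (hX : X ∉ 𝒮)
    (hconn : (bondGraph (insert X 𝒮)).Connected) (Y : Finset L) :
    (bondGraph (insert X (𝒮 \ comp 𝒮 Y))).Connected := by
  have hreach := (conn_insert_iff hX).1 hconn
  have hX' : X ∉ 𝒮 \ comp 𝒮 Y := fun h => hX (Finset.mem_sdiff.1 h).1
  rw [conn_insert_iff hX']
  intro A hA
  rcases Finset.mem_sdiff.1 hA with ⟨hAS, hAC⟩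
  obtain ⟨B, hAB, hBX, hBS⟩ := exists_boundary hX (hreach A hAS) hAS
  have hsub : comp 𝒮 A ⊆ 𝒮 \ comp 𝒮 Y := by
    intro D hD
    exact Finset.mem_sdiff.2 ⟨comp_subset hD, comp_disjoint hAS hAC hD⟩
  have hchain : Relation.ReflTransGen (bstep (insert X (𝒮 \ comp 𝒮 Y))) A B :=
    brtg_mono (hsub.trans (Finset.subset_insert _ _)) (rtg_comp hAB)
  refine hchain.tail ⟨?_, Finset.mem_insert_self _ _, hBX⟩
  exact Finset.mem_insert_of_mem (hsub (mem_comp.2 ⟨hBS, hAB⟩))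

lemma fg_exists {X : Finset L} {𝒮 : Finset (Finset L)} (hX : X ∉ 𝒮) (hne : 𝒮.Nonempty)
    (hconn : (bondGraph (insert X 𝒮)).Connected) :
    ∃ B ∈ 𝒮, ¬ Disjoint B X := by
  obtain ⟨A, hA⟩ := hne
  obtain ⟨B, _, hBX, hBS⟩ := exists_boundary hX ((conn_insert_iff hX).1 hconn A hA) hA
  exact ⟨B, hBS, hBX⟩

lemma singleton_connected (Y : Finset L) : (bondGraph ({Y} : Finset (Finset L))).Connected := by
  rw [bondGraph_connected_iff]
  exact ⟨⟨Y, Finset.mem_singleton_self Y⟩, fun A hA B hB => by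
    rw [Finset.mem_singleton] at hA hB; subst hA; subst hB; exact .refl⟩

end GKaux

namespace GKaux
open scoped ENNReal

open Classical in
lemma tsum_option' {α : Type*} (f : Option α → ℝ≥0∞) :
    ∑' o, f o = f none + ∑' a, f (some a) := by
  rw [ENNReal.tsum_eq_add_tsum_ite (none : Option α)]
  congr 1
  refine Eq.trans ((Function.Injective.tsum_eq (Option.some_injective α) ?_).symm) ?_
  · intro o ho
    cases o with
    | none => simp at ho
    | some a => exact ⟨a, rfl⟩
  · exact tsum_congr fun a => by simp

lemma tsum_subtype_mono {α : Type*} (p q : α → Prop) (h : ∀ a, p a → q a) (f : α → ℝ≥0∞) :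
    ∑' a : {a // p a}, f a.1 ≤ ∑' a : {a // q a}, f a.1 := by
  have := ENNReal.tsum_comp_le_tsum_of_injective
    (f := fun a : {a // p a} => (⟨a.1, h a.1 a.2⟩ : {a // q a}))
    (fun a b hab => Subtype.ext (by simpa [Subtype.ext_iff] using hab))
    (fun a : {a // q a} => f a.1)
  exact this

/-- Product of two "1 + tsum" factors as a tsum over a product of option types. -/
lemma one_add_tsum_mul_one_add_tsum {α β : Type*} (f : α → ℝ≥0∞) (g : β → ℝ≥0∞) :
    (1 + ∑' a, f a) * (1 + ∑' b, g b) =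
      ∑' p : Option α × Option β, (p.1.elim 1 f) * (p.2.elim 1 g) := by
  rw [ENNReal.tsum_prod']
  have h1 : ∀ o : Option α, ∑' o2 : Option β, (Option.elim o 1 f) * (Option.elim o2 1 g)
      = (Option.elim o 1 f) * (1 + ∑' b, g b) := by
    intro o
    rw [ENNReal.tsum_mul_left, tsum_option' (fun o2 => Option.elim o2 1 g)]
    rfl
  calc (1 + ∑' a, f a) * (1 + ∑' b, g b)
      = ∑' o : Option α, (Option.elim o 1 f) * (1 + ∑' b, g b) := by
        rw [ENNReal.tsum_mul_right, tsum_option' (fun o => Option.elim o 1 f)]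
        rfl
    _ = ∑' (o : Option α) (o2 : Option β), (Option.elim o 1 f) * (Option.elim o2 1 g) := by
        exact tsum_congr fun o => (h1 o).symm

end GKaux

namespace GKaux
open scoped ENNReal
variable {L : Type*} [DecidableEq L]

/-- Families of bonds of size at most `n` attached connectedly to `X`. -/
def famN (𝔅 : Set (Finset L)) (X : Finset L) (n : ℕ) (𝒮 : Finset (Finset L)) : Prop :=
  (↑𝒮 ⊆ 𝔅 ∧ X ∉ 𝒮 ∧ 𝒮.Nonempty ∧ (bondGraph (insert X 𝒮)).Connected) ∧ 𝒮.card ≤ n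

/-- Truncated tree sum. -/
noncomputable def TN (𝔅 : Set (Finset L)) (W : Finset L → ℝ≥0∞) (X : Finset L) (n : ℕ) :
    ℝ≥0∞ :=
  1 + ∑' 𝒮 : {𝒮 : Finset (Finset L) // famN 𝔅 X n 𝒮}, ∏ Z ∈ 𝒮.1, W Z

/-- One-bond-rooted connected families bound. -/
lemma stepB (𝔅 : Set (Finset L)) (W : Finset L → ℝ≥0∞) (X Y : Finset L) (n : ℕ) :
    (∑' 𝒯 : {𝒯 : Finset (Finset L) //
        ↑𝒯 ⊆ 𝔅 ∧ Y ∈ 𝒯 ∧ X ∉ 𝒯 ∧ (bondGraph 𝒯).Connected ∧ 𝒯.card ≤ n + 1},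
      ∏ Z ∈ 𝒯.1, W Z) ≤ W Y * TN 𝔅 W Y n := by
  classical
  rw [TN, mul_add, mul_one, ← ENNReal.tsum_mul_left]
  set h : Option {𝒮 : Finset (Finset L) // famN 𝔅 Y n 𝒮} → ℝ≥0∞ :=
    fun o => o.elim (W Y) (fun 𝒮 => W Y * ∏ Z ∈ 𝒮.1, W Z) with hh
  have hsum : W Y + (∑' 𝒮 : {𝒮 : Finset (Finset L) // famN 𝔅 Y n 𝒮},
      W Y * ∏ Z ∈ 𝒮.1, W Z) = ∑' o, h o := (tsum_option' h).symm
  rw [hsum]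
  have hmk : ∀ 𝒯 : {𝒯 : Finset (Finset L) //
      ↑𝒯 ⊆ 𝔅 ∧ Y ∈ 𝒯 ∧ X ∉ 𝒯 ∧ (bondGraph 𝒯).Connected ∧ 𝒯.card ≤ n + 1},
      𝒯.1 ≠ {Y} → famN 𝔅 Y n (𝒯.1.erase Y) := by
    rintro ⟨𝒯, hsub, hY, hX, hconn, hcard⟩ hne
    refine ⟨⟨fun Z hZ => hsub (Finset.erase_subset _ _ hZ), Finset.notMem_erase _ _, ?_, ?_⟩, ?_⟩
    · rw [Finset.nonempty_iff_ne_empty]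
      intro he
      rcases (Finset.erase_eq_empty_iff _ _).1 he with h' | h'
      · have h'' : 𝒯 = ∅ := h'
        exact absurd (h'' ▸ hY) (Finset.notMem_empty Y)
      · exact hne h'
    · rw [Finset.insert_erase hY]; exact hconn
    · show (𝒯.erase Y).card ≤ n
      rw [Finset.card_erase_of_mem hY]
      omega
  set Φ : {𝒯 : Finset (Finset L) //
      ↑𝒯 ⊆ 𝔅 ∧ Y ∈ 𝒯 ∧ X ∉ 𝒯 ∧ (bondGraph 𝒯).Connected ∧ 𝒯.card ≤ n + 1} →
      Option {𝒮 : Finset (Finset L) // famN 𝔅 Y n 𝒮} :=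
    fun 𝒯 => if h1 : 𝒯.1 = {Y} then none else some ⟨𝒯.1.erase Y, hmk 𝒯 h1⟩ with hΦ
  have hinj : Function.Injective Φ := by
    rintro ⟨𝒯₁, h₁⟩ ⟨𝒯₂, h₂⟩ heq
    simp only [hΦ] at heq
    by_cases e1 : 𝒯₁ = {Y} <;> by_cases e2 : 𝒯₂ = {Y}
    · exact Subtype.ext (e1.trans e2.symm)
    · rw [dif_pos e1, dif_neg e2] at heq
      exact absurd heq (by simp)
    · rw [dif_pos e2, dif_neg e1] at heq
      exact absurd heq (by simp)
    · rw [dif_neg e1, dif_neg e2] at heq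
      have h3 : 𝒯₁.erase Y = 𝒯₂.erase Y := by
        simpa [Subtype.ext_iff] using heq
      refine Subtype.ext ?_
      show 𝒯₁ = 𝒯₂
      rw [← Finset.insert_erase h₁.2.1, ← Finset.insert_erase h₂.2.1, h3]
  have hval : ∀ 𝒯, (∏ Z ∈ (𝒯 : {𝒯 : Finset (Finset L) //
      ↑𝒯 ⊆ 𝔅 ∧ Y ∈ 𝒯 ∧ X ∉ 𝒯 ∧ (bondGraph 𝒯).Connected ∧ 𝒯.card ≤ n + 1}).1, W Z)
      = h (Φ 𝒯) := by
    rintro ⟨𝒯, h𝒯⟩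
    by_cases h1 : 𝒯 = {Y}
    · simp only [hΦ, dif_pos h1, hh, Option.elim]
      rw [h1, Finset.prod_singleton]
    · simp only [hΦ, dif_neg h1, hh, Option.elim]
      rw [Finset.mul_prod_erase _ _ h𝒯.2.1]
  calc (∑' 𝒯 : {𝒯 : Finset (Finset L) //
        ↑𝒯 ⊆ 𝔅 ∧ Y ∈ 𝒯 ∧ X ∉ 𝒯 ∧ (bondGraph 𝒯).Connected ∧ 𝒯.card ≤ n + 1},
      ∏ Z ∈ 𝒯.1, W Z) = ∑' 𝒯, h (Φ 𝒯) := tsum_congr hval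
    _ ≤ ∑' o, h o := ENNReal.tsum_comp_le_tsum_of_injective hinj h

end GKaux

namespace GKaux
open scoped ENNReal
variable {L : Type*} [DecidableEq L]

lemma mkB {𝔅 : Set (Finset L)} {X : Finset L} {n : ℕ} {𝒮 : Finset (Finset L)}
    (h : famN 𝔅 X (n + 1) 𝒮) {Y : Finset L} (hY : Y ∈ 𝒮) :
    ↑(comp 𝒮 Y) ⊆ 𝔅 ∧ Y ∈ comp 𝒮 Y ∧ X ∉ comp 𝒮 Y ∧
      (bondGraph (comp 𝒮 Y)).Connected ∧ (comp 𝒮 Y).card ≤ n + 1 := by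
  obtain ⟨⟨hsub, hX, hne, hconn⟩, hcard⟩ := h
  exact ⟨fun Z hZ => hsub (comp_subset hZ), self_mem_comp hY,
    fun hX' => hX (comp_subset hX'), comp_connected hY,
    le_trans (Finset.card_le_card comp_subset) hcard⟩

lemma mkA1 {𝔅 : Set (Finset L)} {X : Finset L} {n : ℕ} {𝒮 : Finset (Finset L)}
    (h : famN 𝔅 X (n + 1) 𝒮) (Y : Finset L) (hrest : (𝒮 \ comp 𝒮 Y).Nonempty) :
    famN 𝔅 X (n + 1) (𝒮 \ comp 𝒮 Y) := by
  obtain ⟨⟨hsub, hX, hne, hconn⟩, hcard⟩ := h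
  exact ⟨⟨fun Z hZ => hsub (Finset.sdiff_subset hZ),
    fun hX' => hX (Finset.sdiff_subset hX'), hrest, rest_connected hX hconn Y⟩,
    le_trans (Finset.card_le_card Finset.sdiff_subset) hcard⟩

lemma claim (𝔅 : Set (Finset L)) (W ζ : Finset L → ℝ≥0∞) {X : Finset L} {n : ℕ}
    (IH : ∀ Y ∈ 𝔅, W Y * TN 𝔅 W Y n ≤ ζ Y) (u : Finset (Finset L)) :
    (∀ Y ∈ u, Y ∈ 𝔅) →
    1 + (∑' 𝒮 : {𝒮 : Finset (Finset L) //
          famN 𝔅 X (n + 1) 𝒮 ∧ ∀ Z ∈ 𝒮, ¬ Disjoint Z X → Z ∈ u},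
        ∏ Z ∈ 𝒮.1, W Z) ≤ ∏ Y ∈ u, (1 + ζ Y) := by
  classical
  induction u using Finset.induction with
  | empty =>
    intro _
    haveI : IsEmpty {𝒮 : Finset (Finset L) //
        famN 𝔅 X (n + 1) 𝒮 ∧ ∀ Z ∈ 𝒮, ¬ Disjoint Z X → Z ∈ (∅ : Finset (Finset L))} := by
      constructor
      rintro ⟨𝒮, ⟨⟨hsub, hX, hne, hconn⟩, _⟩, hfg⟩
      obtain ⟨B, hB, hBX⟩ := fg_exists hX hne hconn
      exact absurd (hfg B hB hBX) (Finset.notMem_empty B)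
    rw [tsum_empty]
    simp
  | @insert Y u' hYu' ih =>
    intro hu
    have hY𝔅 : Y ∈ 𝔅 := hu Y (Finset.mem_insert_self _ _)
    have hu' : ∀ Z ∈ u', Z ∈ 𝔅 := fun Z hZ => hu Z (Finset.mem_insert_of_mem hZ)
    set Bty := {𝒯 : Finset (Finset L) //
      ↑𝒯 ⊆ 𝔅 ∧ Y ∈ 𝒯 ∧ X ∉ 𝒯 ∧ (bondGraph 𝒯).Connected ∧ 𝒯.card ≤ n + 1} with hBty
    set Aty := {𝒮 : Finset (Finset L) //
      famN 𝔅 X (n + 1) 𝒮 ∧ ∀ Z ∈ 𝒮, ¬ Disjoint Z X → Z ∈ u'} with hAty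
    set LI := {𝒮 : Finset (Finset L) //
      famN 𝔅 X (n + 1) 𝒮 ∧ ∀ Z ∈ 𝒮, ¬ Disjoint Z X → Z ∈ insert Y u'} with hLI
    set fB : Bty → ℝ≥0∞ := fun 𝒯 => ∏ Z ∈ 𝒯.1, W Z with hfB
    set fA : Aty → ℝ≥0∞ := fun 𝒮 => ∏ Z ∈ 𝒮.1, W Z with hfA
    set h : Option Bty × Option Aty → ℝ≥0∞ :=
      fun p => (p.1.elim 1 fB) * (p.2.elim 1 fA) with hdef
    have hBle : (∑' 𝒯 : Bty, fB 𝒯) ≤ ζ Y :=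
      le_trans (stepB 𝔅 W X Y n) (IH Y hY𝔅)
    -- the decomposition map
    set Φ : LI → Option Bty × Option Aty := fun 𝒮 =>
      if hY𝒮 : Y ∈ 𝒮.1 then
        (some ⟨comp 𝒮.1 Y, mkB 𝒮.2.1 hY𝒮⟩,
          if hrest : (𝒮.1 \ comp 𝒮.1 Y).Nonempty then
            some ⟨𝒮.1 \ comp 𝒮.1 Y, mkA1 𝒮.2.1 Y hrest,
              fun Z hZ hd => (Finset.mem_insert.1
                  (𝒮.2.2 Z (Finset.sdiff_subset hZ) hd)).resolve_left
                (fun he => (Finset.mem_sdiff.1 hZ).2 (by rw [he]; exact self_mem_comp hY𝒮))⟩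
          else none)
      else
        (none, some ⟨𝒮.1, 𝒮.2.1,
          fun Z hZ hd => (Finset.mem_insert.1 (𝒮.2.2 Z hZ hd)).resolve_left
            (fun he => hY𝒮 (he ▸ hZ))⟩) with hΦ
    set ρ : Option Bty × Option Aty → Finset (Finset L) :=
      fun p => (p.1.elim ∅ Subtype.val) ∪ (p.2.elim ∅ Subtype.val) with hρ
    have hrec : ∀ 𝒮 : LI, ρ (Φ 𝒮) = 𝒮.1 := by
      rintro ⟨𝒮, h𝒮⟩
      by_cases hY𝒮 : Y ∈ 𝒮
      · by_cases hrest : (𝒮 \ comp 𝒮 Y).Nonempty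
        · simp only [hΦ, hρ, dif_pos hY𝒮, dif_pos hrest, Option.elim]
          exact Finset.union_sdiff_of_subset comp_subset
        · simp only [hΦ, hρ, dif_pos hY𝒮, dif_neg hrest, Option.elim]
          have h1 : 𝒮 \ comp 𝒮 Y = ∅ := by
            rwa [Finset.nonempty_iff_ne_empty, not_not] at hrest
          have h2 : 𝒮 ⊆ comp 𝒮 Y := Finset.sdiff_eq_empty_iff_subset.1 h1
          rw [Finset.union_empty]
          exact le_antisymm comp_subset h2
      · simp only [hΦ, hρ, dif_neg hY𝒮, Option.elim]
        exact Finset.empty_union 𝒮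
    have hΦne : ∀ 𝒮 : LI, Φ 𝒮 ≠ (none, none) := by
      rintro ⟨𝒮, h𝒮⟩ hcontr
      by_cases hY𝒮 : Y ∈ 𝒮
      · have := congrArg Prod.fst hcontr
        simp only [hΦ, dif_pos hY𝒮] at this
        exact Option.some_ne_none _ this
      · have := congrArg Prod.snd hcontr
        simp only [hΦ, dif_neg hY𝒮] at this
        exact Option.some_ne_none _ this
    have hΦinj : Function.Injective Φ := by
      intro s1 s2 heq
      have := congrArg ρ heq
      rw [hrec s1, hrec s2] at this
      exact Subtype.ext this
    set Ψ : Option LI → Option Bty × Option Aty := fun o => o.elim (none, none) Φ with hΨ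
    have hΨinj : Function.Injective Ψ := by
      rintro (_ | s1) (_ | s2) heq
      · rfl
      · exact absurd heq.symm (hΦne s2)
      · exact absurd heq (hΦne s1)
      · exact congrArg some (hΦinj heq)
    have hval : ∀ 𝒮 : LI, (∏ Z ∈ 𝒮.1, W Z) = h (Φ 𝒮) := by
      rintro ⟨𝒮, h𝒮⟩
      by_cases hY𝒮 : Y ∈ 𝒮
      · by_cases hrest : (𝒮 \ comp 𝒮 Y).Nonempty
        · simp only [hΦ, hdef, dif_pos hY𝒮, dif_pos hrest, Option.elim, hfB, hfA]
          rw [← Finset.prod_union Finset.disjoint_sdiff,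
            Finset.union_sdiff_of_subset comp_subset]
        · simp only [hΦ, hdef, dif_pos hY𝒮, dif_neg hrest, Option.elim, hfB, hfA]
          have h1 : 𝒮 \ comp 𝒮 Y = ∅ := by
            rwa [Finset.nonempty_iff_ne_empty, not_not] at hrest
          have h2 : comp 𝒮 Y = 𝒮 :=
            le_antisymm comp_subset (Finset.sdiff_eq_empty_iff_subset.1 h1)
          rw [h2, mul_one]
      · simp only [hΦ, hdef, dif_neg hY𝒮, Option.elim, hfA]
        rw [one_mul]
    calc 1 + (∑' 𝒮 : LI, ∏ Z ∈ 𝒮.1, W Z)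
        = ∑' o : Option LI, (o.elim 1 (fun 𝒮 => ∏ Z ∈ 𝒮.1, W Z)) := by
          rw [tsum_option' (fun o : Option LI => o.elim 1 (fun 𝒮 => ∏ Z ∈ 𝒮.1, W Z))]
          rfl
      _ = ∑' o : Option LI, h (Ψ o) := by
          refine tsum_congr ?_
          rintro (_ | 𝒮)
          · simp [hΨ, hdef]
          · exact hval 𝒮
      _ ≤ ∑' p : Option Bty × Option Aty, h p :=
          ENNReal.tsum_comp_le_tsum_of_injective hΨinj h
      _ = (1 + ∑' 𝒯 : Bty, fB 𝒯) * (1 + ∑' 𝒮 : Aty, fA 𝒮) :=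
          (one_add_tsum_mul_one_add_tsum fB fA).symm
      _ ≤ (1 + ζ Y) * (1 + ∑' 𝒮 : Aty, fA 𝒮) :=
          mul_le_mul' (add_le_add le_rfl hBle) le_rfl
      _ ≤ (1 + ζ Y) * ∏ Z ∈ u', (1 + ζ Z) := mul_le_mul' le_rfl (ih hu')
      _ = ∏ Z ∈ insert Y u', (1 + ζ Z) := by rw [Finset.prod_insert hYu']

end GKaux

namespace GKaux
open scoped ENNReal
variable {L : Type*} [DecidableEq L]

lemma mainN (𝔅 : Set (Finset L)) (W ζ : Finset L → ℝ≥0∞)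
    (hζfin : ∀ X ∈ 𝔅, ζ X ≠ ⊤)
    (nb : Finset L → Finset (Finset L))
    (hnb : ∀ X Y : Finset L, Y ∈ nb X ↔ (Y ∈ 𝔅 ∧ Y ≠ X ∧ ¬ Disjoint Y X))
    (hW : ∀ X ∈ 𝔅, W X ≤ ζ X / ∏ Y ∈ nb X, (1 + ζ Y)) :
    ∀ n : ℕ, ∀ X ∈ 𝔅, W X * TN 𝔅 W X n ≤ ζ X := by
  have finishP : ∀ m : ℕ, ∀ X ∈ 𝔅,
      TN 𝔅 W X m ≤ ∏ Y ∈ nb X, (1 + ζ Y) → W X * TN 𝔅 W X m ≤ ζ X := by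
    intro m X hX hTN
    have hP0 : (∏ Y ∈ nb X, (1 + ζ Y)) ≠ 0 :=
      Finset.prod_ne_zero_iff.2 (fun Y _ => fun hc => by simp [add_eq_zero] at hc)
    have hPtop : (∏ Y ∈ nb X, (1 + ζ Y)) ≠ ⊤ :=
      ENNReal.prod_ne_top (fun Y hY =>
        ENNReal.add_ne_top.2 ⟨ENNReal.one_ne_top, hζfin Y ((hnb X Y).1 hY).1⟩)
    calc W X * TN 𝔅 W X m
        ≤ (ζ X / ∏ Y ∈ nb X, (1 + ζ Y)) * ∏ Y ∈ nb X, (1 + ζ Y) :=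
          mul_le_mul' (hW X hX) hTN
      _ = ζ X := ENNReal.div_mul_cancel hP0 hPtop
  intro n
  induction n with
  | zero =>
    intro X hX
    refine finishP 0 X hX ?_
    haveI : IsEmpty {𝒮 : Finset (Finset L) // famN 𝔅 X 0 𝒮} := by
      constructor
      rintro ⟨𝒮, ⟨_, _, hne, _⟩, hcard⟩
      rw [Nat.le_zero, Finset.card_eq_zero] at hcard
      exact Finset.not_nonempty_empty (hcard ▸ hne)
    rw [TN, tsum_empty, add_zero]
    exact Finset.one_le_prod' (fun Y _ => le_self_add)
  | succ n IH =>
    intro X hX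
    refine finishP (n + 1) X hX ?_
    rw [TN]
    have himp : ∀ 𝒮 : Finset (Finset L), famN 𝔅 X (n + 1) 𝒮 →
        famN 𝔅 X (n + 1) 𝒮 ∧ ∀ Z ∈ 𝒮, ¬ Disjoint Z X → Z ∈ nb X := by
      intro 𝒮 h
      exact ⟨h, fun Z hZ hd => (hnb X Z).2
        ⟨h.1.1 hZ, fun he => h.1.2.1 (he ▸ hZ), hd⟩⟩
    calc 1 + (∑' 𝒮 : {𝒮 : Finset (Finset L) // famN 𝔅 X (n + 1) 𝒮}, ∏ Z ∈ 𝒮.1, W Z)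
        ≤ 1 + (∑' 𝒮 : {𝒮 : Finset (Finset L) //
              famN 𝔅 X (n + 1) 𝒮 ∧ ∀ Z ∈ 𝒮, ¬ Disjoint Z X → Z ∈ nb X},
            ∏ Z ∈ 𝒮.1, W Z) := by
          exact add_le_add le_rfl (tsum_subtype_mono _ _ himp (fun 𝒮 => ∏ Z ∈ 𝒮, W Z))
      _ ≤ ∏ Y ∈ nb X, (1 + ζ Y) :=
          claim 𝔅 W ζ IH (nb X) (fun Y hY => ((hnb X Y).1 hY).1)

end GKaux


/-- Tree-summation (Gruber–Kunz type) criterion for bonds: if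
`W(X) ≤ ζ(X) / Π_{Y ∈ 𝔅, Y ≠ X, Y ∩ X ≠ ∅} (1 + ζ(Y))` for all bonds `X`, then the sum
`T(X₀) = 1 + Σ over finite families of distinct bonds of `𝔅 \ {X₀}` whose intersection
graph together with `X₀` is connected, of the product of the weights, satisfies
`W(X₀) · T(X₀) ≤ ζ(X₀)`. -/
theorem stmt_14 {L : Type*} [DecidableEq L]
    (𝔅 : Set (Finset L)) (hcnt : 𝔅.Countable)
    (W ζ : Finset L → ℝ≥0∞)
    (hζpos : ∀ X ∈ 𝔅, 0 < ζ X) (hζfin : ∀ X ∈ 𝔅, ζ X ≠ ⊤)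
    (nb : Finset L → Finset (Finset L))
    (hnb : ∀ X Y : Finset L, Y ∈ nb X ↔ (Y ∈ 𝔅 ∧ Y ≠ X ∧ ¬ Disjoint Y X))
    (hW : ∀ X ∈ 𝔅, W X ≤ ζ X / ∏ Y ∈ nb X, (1 + ζ Y)) :
    ∀ X₀ ∈ 𝔅,
      W X₀ *
        (1 + ∑' 𝒮 : {𝒮 : Finset (Finset L) //
              ↑𝒮 ⊆ 𝔅 ∧ X₀ ∉ 𝒮 ∧ 𝒮.Nonempty ∧ (bondGraph (insert X₀ 𝒮)).Connected},
            ∏ Y ∈ (𝒮 : Finset (Finset L)), W Y) ≤ ζ X₀ := by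
  classical
  intro X₀ hX₀
  rw [ENNReal.tsum_eq_iSup_sum, ENNReal.add_iSup, ENNReal.mul_iSup]
  refine iSup_le fun s => ?_
  set n := s.sup (fun 𝒮 => 𝒮.1.card) with hn
  have hle : (∑ 𝒮 ∈ s, ∏ Z ∈ 𝒮.1, W Z)
      ≤ ∑' 𝒮 : {𝒮 : Finset (Finset L) // GKaux.famN 𝔅 X₀ n 𝒮}, ∏ Z ∈ 𝒮.1, W Z := by
    set s' : Finset {𝒮 : Finset (Finset L) // GKaux.famN 𝔅 X₀ n 𝒮} :=
      s.attach.image (fun x => ⟨x.1.1, x.1.2,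
        by exact Finset.le_sup (f := fun 𝒮 => 𝒮.1.card) x.2⟩) with hs'
    have heq : (∑ 𝒮 ∈ s, ∏ Z ∈ 𝒮.1, W Z) = ∑ t ∈ s', ∏ Z ∈ t.1, W Z := by
      rw [hs', Finset.sum_image ?_]
      · exact (Finset.sum_attach s (fun 𝒮 => ∏ Z ∈ 𝒮.1, W Z)).symm
      · intro x _ y _ hxy
        have : x.1.1 = y.1.1 :=
          congrArg (fun t : {𝒮 : Finset (Finset L) // GKaux.famN 𝔅 X₀ n 𝒮} => t.1) hxy
        exact Subtype.ext (Subtype.ext this)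
    rw [heq]
    exact ENNReal.sum_le_tsum s'
  calc W X₀ * (1 + ∑ 𝒮 ∈ s, ∏ Z ∈ 𝒮.1, W Z)
      ≤ W X₀ * GKaux.TN 𝔅 W X₀ n := by
        rw [GKaux.TN]
        exact mul_le_mul' le_rfl (add_le_add le_rfl hle)
    _ ≤ ζ X₀ := GKaux.mainN 𝔅 W ζ hζfin nb hnb hW n X₀ hX₀
end

section
/- With normalized factorizing trace tr_Λ, partition function Z_B = tr(e^{-βH_B}) for a family of bonds B, and ρ(B) = Σ_{B'⊆B}(-1)^{|B\B'|} Z_{B'}, one has ρ(B) = tr(ξ(B)) and, if the supports of two families B_1, B_2 are disjoint, ρ(B_1 ∪ B_2) = ρ(B_1)·ρ(B_2). -/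
open NormedSpace

/-- Scalar polymer fugacities: with a normalized factorizing trace `τ`,
`Z_B = τ(e^{-βH_B})` and `ρ(B) = Σ_{B' ⊆ B} (-1)^{|B \ B'|} Z_{B'}`, one has
`ρ(B) = τ(ξ(B))` for the operator-valued fugacity `ξ`, and `ρ` factorizes over families
of bonds with disjoint supports. -/
theorem stmt_19 {L A : Type*} [DecidableEq L]
    [NormedRing A] [NormedAlgebra ℂ A] [CompleteSpace A]
    (Φ : Finset L → A) (β : ℝ)
    (hcomm : ∀ X Y : Finset L, Disjoint X Y → Commute (Φ X) (Φ Y))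
    (τ : A →ₗ[ℂ] ℂ)
    (B₁ B₂ : Finset (Finset L))
    (hne : ∀ X ∈ B₁ ∪ B₂, X.Nonempty)
    (hdisj : Disjoint (B₁.sup id) (B₂.sup id))
    (hτ : ∀ 𝒞₁ ⊆ B₁, ∀ 𝒞₂ ⊆ B₂,
      τ (exp (-(β • ∑ X ∈ 𝒞₁, Φ X)) * exp (-(β • ∑ X ∈ 𝒞₂, Φ X))) =
        τ (exp (-(β • ∑ X ∈ 𝒞₁, Φ X))) * τ (exp (-(β • ∑ X ∈ 𝒞₂, Φ X))))
    (ρ : Finset (Finset L) → ℂ)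
    (hρ : ∀ B, ρ B = ∑ B' ∈ B.powerset, ((-1 : ℤ) ^ ((B \ B').card)) •
      τ (exp (-(β • ∑ X ∈ B', Φ X)))) :
    (∀ B : Finset (Finset L),
        ρ B = τ (∑ B' ∈ B.powerset, ((-1 : ℤ) ^ ((B \ B').card)) •
          exp (-(β • ∑ X ∈ B', Φ X)))) ∧
      ρ (B₁ ∪ B₂) = ρ B₁ * ρ B₂ := by
  -- B₁ and B₂ are disjoint families
  have hB : Disjoint B₁ B₂ := by
    rw [Finset.disjoint_left]
    intro X h1 h2
    have hXne := hne X (Finset.mem_union_left _ h1)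
    have h1' : X ≤ B₁.sup id := Finset.le_sup (f := id) h1
    have h2' : X ≤ B₂.sup id := Finset.le_sup (f := id) h2
    have : Disjoint X X := hdisj.mono h1' h2'
    rw [disjoint_self] at this
    exact hXne.ne_empty (by simpa using this)
  constructor
  · intro B
    rw [hρ, map_sum]
    simp only [map_zsmul]
  · -- exponentials factorize for disjoint subfamilies
    have key : ∀ C₁ ⊆ B₁, ∀ C₂ ⊆ B₂,
        exp (-(β • ∑ X ∈ C₁ ∪ C₂, Φ X)) =
        exp (-(β • ∑ X ∈ C₁, Φ X)) * exp (-(β • ∑ X ∈ C₂, Φ X)) := by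
      intro C₁ h1 C₂ h2
      have hd : Disjoint C₁ C₂ := hB.mono h1 h2
      have hc : Commute (∑ X ∈ C₁, Φ X) (∑ X ∈ C₂, Φ X) := by
        refine Commute.sum_left _ _ _ fun X hX => Commute.sum_right _ _ _ fun Y hY => hcomm _ _ ?_
        exact hdisj.mono (le_trans (Finset.le_sup (f := id) hX) (Finset.sup_mono h1))
          (le_trans (Finset.le_sup (f := id) hY) (Finset.sup_mono h2))
      have hc' : Commute (-(β • ∑ X ∈ C₁, Φ X)) (-(β • ∑ X ∈ C₂, Φ X)) := by
        apply Commute.neg_left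
        apply Commute.neg_right
        show _ = _
        rw [smul_mul_smul_comm, hc.eq, smul_mul_smul_comm]
      rw [Finset.sum_union hd, smul_add, neg_add]
      exact exp_add_of_commute_of_mem_ball (𝕂 := ℂ) hc'
        ((expSeries_radius_eq_top ℂ A).symm ▸ edist_lt_top _ _)
        ((expSeries_radius_eq_top ℂ A).symm ▸ edist_lt_top _ _)
    rw [hρ, hρ, hρ, Finset.sum_mul_sum, ← Finset.sum_product']
    refine Finset.sum_nbij' (fun C => (C ∩ B₁, C ∩ B₂)) (fun p => p.1 ∪ p.2)
      ?_ ?_ ?_ ?_ ?_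
    · intro C hC
      simp only [Finset.mem_product, Finset.mem_powerset]
      exact ⟨Finset.inter_subset_right, Finset.inter_subset_right⟩
    · intro p hp
      simp only [Finset.mem_product, Finset.mem_powerset] at hp ⊢
      exact Finset.union_subset_union hp.1 hp.2
    · intro C hC
      simp only [Finset.mem_powerset] at hC
      dsimp only
      rw [← Finset.inter_union_distrib_left, Finset.inter_eq_left.2 hC]
    · intro p hp
      simp only [Finset.mem_product, Finset.mem_powerset] at hp
      have d1 : p.2 ∩ B₁ = ∅ := Finset.disjoint_iff_inter_eq_empty.1
        (hB.symm.mono_left hp.2)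
      have d2 : p.1 ∩ B₂ = ∅ := Finset.disjoint_iff_inter_eq_empty.1
        (hB.mono_left hp.1)
      rw [Finset.union_inter_distrib_right, Finset.union_inter_distrib_right,
        Finset.inter_eq_left.2 hp.1, Finset.inter_eq_left.2 hp.2, d1, d2,
        Finset.union_empty, Finset.empty_union]
    · intro C hC
      simp only [Finset.mem_powerset] at hC
      dsimp only
      have h1 : C ∩ B₁ ⊆ B₁ := Finset.inter_subset_right
      have h2 : C ∩ B₂ ⊆ B₂ := Finset.inter_subset_right
      have hC12 : C = (C ∩ B₁) ∪ (C ∩ B₂) := by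
        rw [← Finset.inter_union_distrib_left, Finset.inter_eq_left.2 hC]
      have hsd : (B₁ ∪ B₂) \ C = (B₁ \ (C ∩ B₁)) ∪ (B₂ \ (C ∩ B₂)) := by
        ext x
        simp only [Finset.mem_sdiff, Finset.mem_union, Finset.mem_inter]
        tauto
      have hsdd : Disjoint (B₁ \ (C ∩ B₁)) (B₂ \ (C ∩ B₂)) :=
        hB.mono (Finset.sdiff_subset) (Finset.sdiff_subset)
      have hcard : ((B₁ ∪ B₂) \ C).card
          = (B₁ \ (C ∩ B₁)).card + (B₂ \ (C ∩ B₂)).card := by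
        rw [hsd, Finset.card_union_of_disjoint hsdd]
      rw [hcard, pow_add,
        show (∑ X ∈ C, Φ X) = ∑ X ∈ (C ∩ B₁) ∪ (C ∩ B₂), Φ X from by rw [← hC12],
        key _ h1 _ h2, hτ _ h1 _ h2, smul_mul_smul_comm]
end
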